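/- Let (Y;S) be a primitive representation of a finite semigroup S on a finite set Y with |Y| > 2, let J be the set of minimal functions of (Y;S), and let C be the set of constant functions in γ(S). Then: (1) for any nonconstant s, t ∈ γ(S) there exists u ∈ γ(S) ∪ {id_Y} with s∘u∘t nonconstant; (2) J is a single 𝒥-class of the transformation semigroup γ(S) and this 𝒥-class is regular; (3) every nonconstant element of γ(S) lies 𝒥-above some element of J, and every element strictly 𝒥-below J is constant; (4) the equivalence relation on Y generated by the union of W × W over all minimal sets W is the universal relation; (5) the union of the images j(Y), j ∈ J, is all of Y, and for j, k ∈ J the composite j∘k is either again in J or a constant function. -/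
import Mathlib


section TransformationReps

variable {Y : Type*}

/-- A constant function. -/
def IsConst (f : Y → Y) : Prop := ∃ c, ∀ y, f y = c

/-- `W` is a minimal set of the representation given by the set `T` of transformations:
it is a non-singleton image set which is minimal among non-singleton image sets. -/
def MinSet (T : Set (Y → Y)) (W : Set Y) : Prop :=
  2 ≤ W.ncard ∧ (∃ s ∈ T, Set.range s = W) ∧
    ∀ t ∈ T, 2 ≤ (Set.range t).ncard → Set.range t ⊆ W → Set.range t = W

/-- A minimal function: an element of `T` whose image is a minimal set. -/
def MinFun (T : Set (Y → Y)) (f : Y → Y) : Prop :=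
  f ∈ T ∧ MinSet T (Set.range f)

/-- The representation given by the set `T` of transformations of `Y` is primitive: the
only `T`-compatible equivalence relations on `Y` are the diagonal and the universal one. -/
def PrimitiveRep (T : Set (Y → Y)) : Prop :=
  ∀ θ : Y → Y → Prop, Equivalence θ →
    (∀ a b, θ a b → ∀ f ∈ T, θ (f a) (f b)) →
    (∀ a b, θ a b → a = b) ∨ (∀ a b, θ a b)

/-- The 𝒥-preorder `f ≤_𝒥 g` (i.e. `T¹fT¹ ⊆ T¹gT¹`, i.e. `f ∈ T¹gT¹`) on the
transformation semigroup `T`. -/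
def jBelow (T : Set (Y → Y)) (f g : Y → Y) : Prop :=
  f = g ∨ (∃ u ∈ T, f = u ∘ g) ∨ (∃ v ∈ T, f = g ∘ v) ∨
    ∃ u ∈ T, ∃ v ∈ T, f = u ∘ g ∘ v

end TransformationReps

section Aux

variable {Y : Type*} [Finite Y]

lemma aux_nonconst_iff [Nonempty Y] (f : Y → Y) :
    ¬ IsConst f ↔ 2 ≤ (Set.range f).ncard := by
  have h1 : (2 : ℕ) ≤ (Set.range f).ncard ↔ 1 < (Set.range f).ncard := by omega
  rw [h1, Set.one_lt_ncard_iff]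
  constructor
  · intro h
    by_contra hc
    push_neg at hc
    apply h
    obtain ⟨y⟩ := ‹Nonempty Y›
    refine ⟨f y, fun z => ?_⟩
    by_contra hne
    exact hne (hc (f z) (f y) ⟨z, rfl⟩ ⟨y, rfl⟩)
  · rintro ⟨a, b, ⟨x, rfl⟩, ⟨y, rfl⟩, hne⟩ ⟨c, hc⟩
    exact hne (by rw [hc x, hc y])

lemma aux_sandwich [Nonempty Y] {T : Set (Y → Y)}
    (hT : ∀ f ∈ T, ∀ g ∈ T, f ∘ g ∈ T)
    (hprim : PrimitiveRep T) {s t : Y → Y} (hs : s ∈ T) (ht : t ∈ T)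
    (hs' : ¬ IsConst s) (ht' : ¬ IsConst t) :
    ∃ u, (u ∈ T ∨ u = id) ∧ ¬ IsConst (s ∘ u ∘ t) := by
  by_contra hcon
  push_neg at hcon
  set θ : Y → Y → Prop := fun a b => ∀ w, (w ∈ T ∨ w = id) → s (w a) = s (w b) with hθ
  have hequiv : Equivalence θ :=
    ⟨fun a w hw => rfl, fun h w hw => (h w hw).symm,
      fun h1 h2 w hw => (h1 w hw).trans (h2 w hw)⟩
  have hcompat : ∀ a b, θ a b → ∀ f ∈ T, θ (f a) (f b) := by
    intro a b hab f hf w hw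
    have hwf : w ∘ f ∈ T := by
      rcases hw with hw | rfl
      · exact hT w hw f hf
      · simpa using hf
    exact hab (w ∘ f) (Or.inl hwf)
  rcases hprim θ hequiv hcompat with hdiag | huniv
  · obtain ⟨x, y, hxy⟩ : ∃ x y, t x ≠ t y := by
      by_contra h
      push_neg at h
      obtain ⟨y0⟩ := ‹Nonempty Y›
      exact ht' ⟨t y0, fun z => h z y0⟩
    have hθxy : θ (t x) (t y) := by
      intro w hw
      obtain ⟨c, hc⟩ := hcon w hw
      exact (hc x).trans (hc y).symm
    exact hxy (hdiag _ _ hθxy)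
  · apply hs'
    obtain ⟨y0⟩ := ‹Nonempty Y›
    exact ⟨s y0, fun y => (huniv y y0) id (Or.inr rfl)⟩

end Aux

/-- Basic structure of a primitive representation `(Y;S)` with `|Y| > 2`, where `J` is the
set of minimal functions of `(Y;S)`:
(1) for nonconstant `s, t ∈ γ(S)` there is `u ∈ γ(S) ∪ {id}` with `s∘u∘t` nonconstant;
(2) `J` is a single 𝒥-class of the transformation semigroup `γ(S)`, and it is regular;
(3) every nonconstant element of `γ(S)` is 𝒥-above some element of `J`, and every element
    strictly 𝒥-below `J` is constant;
(4) the equivalence relation on `Y` generated by the union of `W × W` over all minimal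
    sets `W` is the universal relation;
(5) the images of the minimal functions cover `Y`, and the composite of two minimal
    functions is a minimal function or a constant. -/
theorem primitive_minimal_functions_structure {S Y : Type*} [Semigroup S] [Fintype S]
    [Fintype Y] (γ : S → Y → Y) (hγ : ∀ s t : S, γ (s * t) = γ s ∘ γ t)
    (hcard : 2 < Fintype.card Y)
    (hprim : PrimitiveRep (Set.range γ)) :
    (∀ s ∈ Set.range γ, ∀ t ∈ Set.range γ, ¬ IsConst s → ¬ IsConst t →
      ∃ u : Y → Y, (u ∈ Set.range γ ∨ u = id) ∧ ¬ IsConst (s ∘ u ∘ t)) ∧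
    ((∃ f, MinFun (Set.range γ) f) ∧
      (∀ f g : Y → Y, MinFun (Set.range γ) f → MinFun (Set.range γ) g →
        jBelow (Set.range γ) f g) ∧
      (∀ f g : Y → Y, MinFun (Set.range γ) f → g ∈ Set.range γ →
        jBelow (Set.range γ) g f → jBelow (Set.range γ) f g →
          MinFun (Set.range γ) g) ∧
      (∀ f : Y → Y, MinFun (Set.range γ) f →
        ∃ g ∈ Set.range γ, f ∘ g ∘ f = f)) ∧
    ((∀ f ∈ Set.range γ, ¬ IsConst f →
        ∃ j : Y → Y, MinFun (Set.range γ) j ∧ jBelow (Set.range γ) j f) ∧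
      (∀ f ∈ Set.range γ, ∀ j : Y → Y, MinFun (Set.range γ) j →
        jBelow (Set.range γ) f j → ¬ jBelow (Set.range γ) j f → IsConst f)) ∧
    (∀ a b : Y, Relation.EqvGen
      (fun p q => ∃ W : Set Y, MinSet (Set.range γ) W ∧ p ∈ W ∧ q ∈ W) a b) ∧
    ((∀ y : Y, ∃ j : Y → Y, MinFun (Set.range γ) j ∧ y ∈ Set.range j) ∧
      (∀ j k : Y → Y, MinFun (Set.range γ) j → MinFun (Set.range γ) k →
        MinFun (Set.range γ) (j ∘ k) ∨ IsConst (j ∘ k))) := by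
  classical
  have hNe : Nonempty Y := by
    rw [← Fintype.card_pos_iff]; omega
  set T : Set (Y → Y) := Set.range γ with hTdef
  -- closure under composition
  have hT : ∀ f ∈ T, ∀ g ∈ T, f ∘ g ∈ T := by
    rintro f ⟨a, rfl⟩ g ⟨b, rfl⟩; exact ⟨a * b, hγ a b⟩
  have hTcomp' : ∀ u, (u ∈ T ∨ u = id) → ∀ g ∈ T, u ∘ g ∈ T := by
    rintro u (h | rfl) g hg
    · exact hT u h g hg
    · rw [Function.id_comp]; exact hg
  have hTcomp'' : ∀ g ∈ T, ∀ u, (u ∈ T ∨ u = id) → g ∘ u ∈ T := by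
    rintro g hg u (h | rfl)
    · exact hT g hg u h
    · rw [Function.comp_id]; exact hg
  have hTpow : ∀ f ∈ T, ∀ n : ℕ, 1 ≤ n → f^[n] ∈ T := by
    intro f hf n hn
    induction n with
    | zero => omega
    | succ k ih =>
      rcases Nat.eq_or_lt_of_le hn with h | h
      · rw [← h]; simpa using hf
      · rw [Function.iterate_succ']
        exact hT f hf _ (ih (by omega))
  have hnc : ∀ f : Y → Y, ¬ IsConst f ↔ 2 ≤ (Set.range f).ncard :=
    fun f => aux_nonconst_iff f
  have hrank_comp : ∀ (a b : Y → Y),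
      (Set.range (a ∘ b)).ncard ≤ (Set.range b).ncard := by
    intro a b
    rw [Set.range_comp]
    exact Set.ncard_image_le (Set.toFinite _)
  have hrank_sub : ∀ (a b : Y → Y),
      (Set.range (b ∘ a)).ncard ≤ (Set.range b).ncard := fun a b =>
    Set.ncard_le_ncard (Set.range_comp_subset_range a b) (Set.toFinite _)
  -- existence of a nonconstant function in T
  have hex_nc : ∃ f ∈ T, ¬ IsConst f := by
    by_contra h
    push_neg at h
    obtain ⟨p⟩ := hNe
    obtain ⟨q, hqp⟩ := Fintype.exists_ne_of_one_lt_card (by omega) p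
    have hpq : p ≠ q := fun h => hqp h.symm
    obtain ⟨r, hr1, hr2⟩ : ∃ r : Y, r ≠ p ∧ r ≠ q := by
      by_contra hcr
      push_neg at hcr
      have hsub : (Finset.univ : Finset Y) ⊆ {p, q} := by
        intro r _
        rcases eq_or_ne r p with h' | h'
        · simp [h']
        · simp [hcr r h']
      have h2 : Fintype.card Y ≤ 2 := by
        calc Fintype.card Y = (Finset.univ : Finset Y).card := rfl
          _ ≤ ({p, q} : Finset Y).card := Finset.card_le_card hsub
          _ ≤ 2 := Finset.card_insert_le p {q} |>.trans (by simp)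
      omega
    set θ : Y → Y → Prop :=
      fun a b => a = b ∨ (a = p ∧ b = q) ∨ (a = q ∧ b = p) with hθ
    have hequiv : Equivalence θ := by
      constructor
      · intro a; exact Or.inl rfl
      · rintro a b (rfl | ⟨rfl, rfl⟩ | ⟨rfl, rfl⟩)
        · exact Or.inl rfl
        · exact Or.inr (Or.inr ⟨rfl, rfl⟩)
        · exact Or.inr (Or.inl ⟨rfl, rfl⟩)
      · rintro a b c h1 h2
        rcases h1 with h1 | ⟨h1a, h1b⟩ | ⟨h1a, h1b⟩ <;>
          rcases h2 with h2 | ⟨h2a, h2b⟩ | ⟨h2a, h2b⟩ <;>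
          subst_vars <;> tauto
    have hcompat : ∀ a b, θ a b → ∀ f ∈ T, θ (f a) (f b) := by
      intro a b hab f hf
      obtain ⟨c, hc⟩ := h f hf
      exact Or.inl ((hc a).trans (hc b).symm)
    rcases hprim θ hequiv hcompat with hdiag | huniv
    · exact hpq (hdiag p q (Or.inr (Or.inl ⟨rfl, rfl⟩)))
    · rcases huniv p r with h' | ⟨-, h'⟩ | ⟨h', -⟩
      · exact hr1 h'.symm
      · exact hr2 h'
      · exact hpq h'
  -- a nonconstant function of minimal rank
  obtain ⟨f₀, hf₀T, hf₀nc, hf₀min⟩ : ∃ f₀ ∈ T, ¬ IsConst f₀ ∧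
      ∀ g ∈ T, ¬ IsConst g → (Set.range f₀).ncard ≤ (Set.range g).ncard := by
    set A : Set ℕ := {n | ∃ f ∈ T, ¬ IsConst f ∧ (Set.range f).ncard = n} with hA
    have hAne : A.Nonempty := by
      obtain ⟨f, hf, hnc'⟩ := hex_nc
      exact ⟨_, f, hf, hnc', rfl⟩
    obtain ⟨f, hfT, hfnc, hfn⟩ := Nat.sInf_mem hAne
    exact ⟨f, hfT, hfnc, fun g hg hgnc => hfn ▸ Nat.sInf_le ⟨g, hg, hgnc, rfl⟩⟩
  set m : ℕ := (Set.range f₀).ncard with hm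
  have hm2 : 2 ≤ m := (hnc f₀).1 hf₀nc
  have hL1 : ∀ g ∈ T, ¬ IsConst g → m ≤ (Set.range g).ncard := hf₀min
  -- characterization of minimal functions
  have h_minfun_of : ∀ g ∈ T, ¬ IsConst g → (Set.range g).ncard ≤ m → MinFun T g := by
    intro g hg hgnc hle
    refine ⟨hg, (hnc g).1 hgnc, ⟨g, hg, rfl⟩, ?_⟩
    intro t htT ht2 hsub
    refine Set.eq_of_subset_of_ncard_le hsub ?_ (Set.toFinite _)
    calc (Set.range g).ncard ≤ m := hle
      _ ≤ (Set.range t).ncard := hL1 t htT ((hnc t).2 ht2)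
  have hminfun₀ : MinFun T f₀ := h_minfun_of f₀ hf₀T hf₀nc le_rfl
  have h_rank_of_minfun : ∀ f, MinFun T f → (Set.range f).ncard = m := by
    rintro f ⟨hfT, h2, -, hmin⟩
    have hfnc : ¬ IsConst f := (hnc f).2 h2
    obtain ⟨u, hu, hnc'⟩ := aux_sandwich hT hprim hfT hf₀T hfnc hf₀nc
    have hhT : f ∘ u ∘ f₀ ∈ T := hT f hfT _ (hTcomp' u hu f₀ hf₀T)
    have hsub : Set.range (f ∘ u ∘ f₀) ⊆ Set.range f :=
      Set.range_comp_subset_range _ f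
    have heq : Set.range (f ∘ u ∘ f₀) = Set.range f :=
      hmin _ hhT ((hnc _).1 hnc') hsub
    have hle : (Set.range (f ∘ u ∘ f₀)).ncard ≤ m :=
      (hrank_comp f (u ∘ f₀)).trans (hrank_comp u f₀)
    rw [heq] at hle
    exact le_antisymm hle (hL1 f hfT hfnc)
  -- regularity
  have hreg : ∀ f, MinFun T f → ∃ g ∈ T, f ∘ g ∘ f = f := by
    rintro f ⟨hfT, h2, -, hmin⟩
    have hfnc : ¬ IsConst f := (hnc f).2 h2
    obtain ⟨u, hu, hncc⟩ := aux_sandwich hT hprim hfT hfT hfnc hfnc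
    have heT : f ∘ u ∈ T := hTcomp'' f hfT u hu
    have hefT : f ∘ u ∘ f ∈ T := hT f hfT _ (hTcomp' u hu f hfT)
    have hrange : Set.range (f ∘ u ∘ f) = Set.range f :=
      hmin _ hefT ((hnc _).1 hncc) (Set.range_comp_subset_range _ f)
    have him : (f ∘ u) '' (Set.range f) = Set.range f := by
      rw [← Set.range_comp]
      exact hrange
    have hiter : ∀ k : ℕ, (f ∘ u)^[k] '' Set.range f = Set.range f := by
      intro k
      induction k with
      | zero => simp
      | succ k ih =>
        rw [Function.iterate_succ', Set.image_comp, ih, him]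
    have main : ∀ i j : ℕ, i < j → (f ∘ u)^[i] = (f ∘ u)^[j] →
        ∀ x ∈ Set.range f, (f ∘ u)^[j - i] x = x := by
      intro i j hlt hfeq x hx
      rw [← hiter i] at hx
      obtain ⟨y, hy, rfl⟩ := hx
      calc (f ∘ u)^[j - i] ((f ∘ u)^[i] y)
          = (f ∘ u)^[j - i + i] y := (Function.iterate_add_apply _ _ _ _).symm
        _ = (f ∘ u)^[j] y := by rw [Nat.sub_add_cancel hlt.le]
        _ = (f ∘ u)^[i] y := by rw [← hfeq]
    obtain ⟨i, j, hij, hEq⟩ :=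
      Finite.exists_ne_map_eq_of_infinite (fun n : ℕ => (f ∘ u)^[n])
    obtain ⟨n, hn1, hnfix⟩ : ∃ n, 1 ≤ n ∧ ∀ x ∈ Set.range f, (f ∘ u)^[n] x = x := by
      rcases lt_or_gt_of_ne hij with h | h
      · exact ⟨j - i, by omega, main i j h hEq⟩
      · exact ⟨i - j, by omega, main j i h hEq.symm⟩
    have hfix2 : ∀ x ∈ Set.range f, (f ∘ u)^[2 * n] x = x := by
      intro x hx
      rw [two_mul, Function.iterate_add_apply, hnfix x hx, hnfix x hx]
    refine ⟨u ∘ (f ∘ u)^[2 * n - 1], ?_, ?_⟩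
    · have hpow : (f ∘ u)^[2 * n - 1] ∈ T := hTpow _ heT _ (by omega)
      exact hTcomp' u hu _ hpow
    · funext x
      show f (u ((f ∘ u)^[2 * n - 1] (f x))) = f x
      have h1 : f (u ((f ∘ u)^[2 * n - 1] (f x))) = (f ∘ u)^[2 * n - 1 + 1] (f x) := by
        rw [Function.iterate_succ_apply']
        rfl
      rw [h1, show 2 * n - 1 + 1 = 2 * n by omega]
      exact hfix2 (f x) ⟨x, rfl⟩
  -- minimal functions are mutually 𝒥-related
  have hmutual : ∀ f g, MinFun T f → MinFun T g → jBelow T f g := by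
    intro f g hf hg
    obtain ⟨hfT, hf2, -, hfmin⟩ := hf
    have hfnc : ¬ IsConst f := (hnc f).2 hf2
    have hgT : g ∈ T := hg.1
    have hgnc : ¬ IsConst g := (hnc g).2 hg.2.1
    obtain ⟨qf, hqfT, hqf⟩ := hreg f ⟨hfT, hf2, ⟨f, hfT, rfl⟩, hfmin⟩
    set ef : Y → Y := f ∘ qf with hef
    have hefT : ef ∈ T := hT f hfT qf hqfT
    have heffix : ∀ w ∈ Set.range f, ef w = w := by
      rintro w ⟨y, rfl⟩
      exact congrFun hqf y
    have hefnc : ¬ IsConst ef := by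
      rintro ⟨c, hc⟩
      obtain ⟨a, b, ha, hb, hab⟩ :=
        (Set.one_lt_ncard_iff (Set.toFinite _)).1 (by omega : 1 < (Set.range f).ncard)
      exact hab (by rw [← heffix a ha, ← heffix b hb, hc, hc])
    obtain ⟨u, hu, hznc⟩ := aux_sandwich hT hprim hefT hgT hefnc hgnc
    set z : Y → Y := ef ∘ u ∘ g with hz
    have hzT : z ∈ T := hT ef hefT _ (hTcomp' u hu g hgT)
    have hzsub : Set.range z ⊆ Set.range f := by
      rintro y ⟨x, rfl⟩
      exact ⟨qf (u (g x)), rfl⟩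
    have hzrange : Set.range z = Set.range f :=
      hfmin z hzT ((hnc z).1 hznc) hzsub
    have hzmin : MinFun T z := by
      refine h_minfun_of z hzT hznc ?_
      rw [hzrange]
      exact (h_rank_of_minfun f ⟨hfT, hf2, ⟨f, hfT, rfl⟩, hfmin⟩).le
    obtain ⟨qz, hqzT, hqz⟩ := hreg z hzmin
    have hzfix : ∀ w ∈ Set.range z, z (qz w) = w := by
      rintro w ⟨y, rfl⟩
      exact congrFun hqz y
    refine Or.inr (Or.inr (Or.inr ⟨ef ∘ u, hTcomp'' ef hefT u hu,
      qz ∘ f, hT qz hqzT f hfT, ?_⟩))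
    funext x
    show f x = ef (u (g (qz (f x))))
    have hfx : f x ∈ Set.range z := hzrange ▸ ⟨x, rfl⟩
    exact (hzfix (f x) hfx).symm
  -- rank bound for functions 𝒥-below a minimal function
  have hrank_of_below : ∀ f g, MinFun T g → jBelow T f g → (Set.range f).ncard ≤ m := by
    intro f g hg hfg
    have hgm : (Set.range g).ncard = m := h_rank_of_minfun g hg
    rcases hfg with rfl | ⟨u, -, rfl⟩ | ⟨v, -, rfl⟩ | ⟨u, -, v, -, rfl⟩
    · exact hgm.le
    · exact (hrank_comp u g).trans hgm.le
    · exact (hrank_sub v g).trans hgm.le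
    · exact ((hrank_comp u (g ∘ v)).trans (hrank_sub v g)).trans hgm.le
  -- constants are 𝒥-closed downwards
  have hconst_below : ∀ f g : Y → Y, IsConst g → jBelow T f g → IsConst f := by
    intro f g hgc hfg
    obtain ⟨c, hc⟩ := hgc
    rcases hfg with rfl | ⟨u, -, rfl⟩ | ⟨v, -, rfl⟩ | ⟨u, -, v, -, rfl⟩
    · exact ⟨c, hc⟩
    · exact ⟨u c, fun y => by show u (g y) = u c; rw [hc]⟩
    · exact ⟨c, fun y => hc (v y)⟩
    · exact ⟨u c, fun y => by show u (g (v y)) = u c; rw [hc]⟩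
  -- the 𝒥-class statement
  have hJclass : ∀ f g : Y → Y, MinFun T f → g ∈ T →
      jBelow T g f → jBelow T f g → MinFun T g := by
    intro f g hf hgT hgf hfg
    have hfnc : ¬ IsConst f := (hnc f).2 hf.2.1
    have hgnc : ¬ IsConst g := fun hgc => hfnc (hconst_below f g hgc hfg)
    exact h_minfun_of g hgT hgnc (hrank_of_below g f hf hgf)
  -- every nonconstant function is 𝒥-above a minimal one
  have habove : ∀ f ∈ T, ¬ IsConst f → ∃ j, MinFun T j ∧ jBelow T j f := by
    intro f hfT hfnc
    obtain ⟨u, hu, hncc⟩ := aux_sandwich hT hprim hfT hf₀T hfnc hf₀nc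
    have hwT : u ∘ f₀ ∈ T := hTcomp' u hu f₀ hf₀T
    have hjT : f ∘ u ∘ f₀ ∈ T := hT f hfT _ hwT
    have hrank : (Set.range (f ∘ u ∘ f₀)).ncard ≤ m :=
      (hrank_comp f (u ∘ f₀)).trans (hrank_comp u f₀)
    exact ⟨f ∘ u ∘ f₀, h_minfun_of _ hjT hncc hrank,
      Or.inr (Or.inr (Or.inl ⟨u ∘ f₀, hwT, rfl⟩))⟩
  -- everything strictly below a minimal function is constant
  have hbelow : ∀ f ∈ T, ∀ j, MinFun T j → jBelow T f j →
      ¬ jBelow T j f → IsConst f := by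
    intro f hfT j hj hfj hnjf
    by_contra hfnc
    exact hnjf (hmutual j f hj (h_minfun_of f hfT hfnc (hrank_of_below f j hj hfj)))
  -- minimal sets have rank m
  have hminset_rank : ∀ W, MinSet T W → W.ncard = m := by
    rintro W ⟨h2, ⟨s, hsT, rfl⟩, hWmin⟩
    exact h_rank_of_minfun s ⟨hsT, h2, ⟨s, hsT, rfl⟩, hWmin⟩
  -- part (4): the generated equivalence is universal
  set R : Y → Y → Prop :=
    fun p q => ∃ W : Set Y, MinSet T W ∧ p ∈ W ∧ q ∈ W with hR
  have hRcompat : ∀ a b, Relation.EqvGen R a b → ∀ f ∈ T, Relation.EqvGen R (f a) (f b) := by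
    intro a b hab
    induction hab with
    | rel p q hpq =>
      intro f hfT
      obtain ⟨W, hW, hp, hq⟩ := hpq
      obtain ⟨h2, ⟨w, hwT, hweq⟩, hWmin⟩ := hW
      subst hweq
      by_cases hc : IsConst (f ∘ w)
      · obtain ⟨c, hcc⟩ := hc
        obtain ⟨x, rfl⟩ := hp
        obtain ⟨y, rfl⟩ := hq
        have hxy : f (w x) = f (w y) := (hcc x).trans (hcc y).symm
        rw [hxy]
        exact Relation.EqvGen.refl _
      · have hfwT : f ∘ w ∈ T := hT f hfT w hwT
        have hrank : (Set.range (f ∘ w)).ncard ≤ m :=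
          (hrank_comp f w).trans (hminset_rank _ ⟨h2, ⟨w, hwT, rfl⟩, hWmin⟩).le
        have hmin : MinFun T (f ∘ w) := h_minfun_of _ hfwT hc hrank
        apply Relation.EqvGen.rel
        refine ⟨Set.range (f ∘ w), hmin.2, ?_, ?_⟩
        · obtain ⟨x, rfl⟩ := hp; exact ⟨x, rfl⟩
        · obtain ⟨y, rfl⟩ := hq; exact ⟨y, rfl⟩
    | refl x => exact fun f hf => Relation.EqvGen.refl _
    | symm x y h ih => exact fun f hf => Relation.EqvGen.symm _ _ (ih f hf)
    | trans x y z h1 h2 ih1 ih2 =>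
      exact fun f hf => Relation.EqvGen.trans _ _ _ (ih1 f hf) (ih2 f hf)
  have hpart4 : ∀ a b : Y, Relation.EqvGen R a b := by
    rcases hprim (Relation.EqvGen R) (Relation.EqvGen.is_equivalence R) hRcompat
      with hdiag | huniv
    · exfalso
      obtain ⟨a, b, ha, hb, hab⟩ :=
        (Set.one_lt_ncard_iff (Set.toFinite _)).1
          (by omega : 1 < (Set.range f₀).ncard)
      exact hab (hdiag a b (Relation.EqvGen.rel a b
        ⟨Set.range f₀, hminfun₀.2, ha, hb⟩))
    · exact huniv
  -- part (5a): images of minimal functions cover Y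
  have hcover : ∀ y : Y, ∃ j, MinFun T j ∧ y ∈ Set.range j := by
    have hUincl : ∀ a b, Relation.EqvGen R a b → a = b ∨
        ((∃ j, MinFun T j ∧ a ∈ Set.range j) ∧
          (∃ j, MinFun T j ∧ b ∈ Set.range j)) := by
      intro a b h
      induction h with
      | rel p q hpq =>
        obtain ⟨W, hW, hp, hq⟩ := hpq
        obtain ⟨h2, ⟨w, hwT, hweq⟩, hWmin⟩ := hW
        subst hweq
        exact Or.inr ⟨⟨w, ⟨hwT, h2, ⟨w, hwT, rfl⟩, hWmin⟩, hp⟩,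
          ⟨w, ⟨hwT, h2, ⟨w, hwT, rfl⟩, hWmin⟩, hq⟩⟩
      | refl x => exact Or.inl rfl
      | symm x y h ih =>
        rcases ih with rfl | ⟨h1, h2⟩
        · exact Or.inl rfl
        · exact Or.inr ⟨h2, h1⟩
      | trans x y z h1 h2 ih1 ih2 =>
        rcases ih1 with rfl | ⟨ha, hb⟩
        · exact ih2
        · rcases ih2 with rfl | ⟨hb', hc⟩
          · exact Or.inr ⟨ha, hb⟩
          · exact Or.inr ⟨ha, hc⟩
    intro y
    obtain ⟨b, hb⟩ := Fintype.exists_ne_of_one_lt_card (by omega) y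
    rcases hUincl y b (hpart4 y b) with h | h
    · exact absurd h.symm hb
    · exact h.1
  -- assemble everything
  refine ⟨?_, ⟨⟨f₀, hminfun₀⟩, hmutual, hJclass, ?_⟩, ⟨habove, hbelow⟩, hpart4,
    hcover, ?_⟩
  · exact fun s hs t ht hs' ht' => aux_sandwich hT hprim hs ht hs' ht'
  · exact fun f hf => hreg f hf
  · intro j k hj hk
    by_cases hc : IsConst (j ∘ k)
    · exact Or.inr hc
    · refine Or.inl (h_minfun_of _ (hT j hj.1 k hk.1) hc ?_)
      exact (hrank_comp j k).trans (h_rank_of_minfun k hk).le
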